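/- Let α = 3 + 2√2. If (x_n) is a sequence of positive real numbers such that for every n ≥ 1, β·x_n ≥ (∑_{i=1}^{n+1} x_i) + x_{n+1}, then β ≥ 3 + 2√2. -/

import Mathlib

theorem stmt_0 (β : ℝ) (x : ℕ → ℝ)
    (hpos : ∀ n, 1 ≤ n → 0 < x n)
    (hrec : ∀ n, 1 ≤ n → β * x n ≥ (∑ i ∈ Finset.Icc 1 (n+1), x i) + x (n+1)) :
    β ≥ 3 + 2 * Real.sqrt 2 := by
  by_contra hβ
  push_neg at hβ
  have h2 : Real.sqrt 2 ^ 2 = 2 := Real.sq_sqrt (by norm_num)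
  have hsplit : ∀ n : ℕ, 1 ≤ n →
      (∑ i ∈ Finset.Icc 1 (n+1), x i) = (∑ i ∈ Finset.Icc 1 n, x i) + x (n+1) := by
    intro n hn
    exact Finset.sum_Icc_succ_top (by omega) x
  -- β > 1
  have hb1 : 1 < β := by
    have h1 := hrec 1 le_rfl
    rw [hsplit 1 le_rfl] at h1
    simp [Finset.Icc_self] at h1
    have hx1 := hpos 1 le_rfl
    have hx2 := hpos 2 (by norm_num)
    nlinarith
  have hb0 : 0 < β := by linarith
  obtain ⟨δ, hδdef⟩ : ∃ δ:ℝ, δ = (6*β - β^2 - 1)/4 := ⟨_, rfl⟩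
  have hs2 : (1:ℝ) < Real.sqrt 2 := by nlinarith [Real.sqrt_nonneg 2]
  have hδ : 0 < δ := by
    rw [hδdef]
    have hp : 0 < (3 + 2*Real.sqrt 2 - β) * (β - 3 + 2*Real.sqrt 2) :=
      mul_pos (by linarith) (by linarith)
    nlinarith
  -- the invariant
  have key : ∀ n : ℕ, 1 ≤ n →
      (1 + ((n:ℝ) - 1) * δ / β) * x n ≤ ∑ i ∈ Finset.Icc 1 n, x i := by
    intro n hn
    induction n with
    | zero => omega
    | succ m ih =>
      rcases Nat.eq_or_lt_of_le hn with h1 | h1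
      · -- m + 1 = 1
        have hm : m = 0 := by omega
        subst hm
        simp [Finset.Icc_self]
      · have hm1 : 1 ≤ m := by omega
        obtain ⟨t, ht⟩ : ∃ t:ℝ, t = 1 + ((m:ℝ) - 1) * δ / β := ⟨_, rfl⟩
        have hS : t * x m ≤ ∑ i ∈ Finset.Icc 1 m, x i := by rw [ht]; exact ih hm1
        have ht1 : 1 ≤ t := by
          rw [ht]
          have : 0 ≤ ((m:ℝ) - 1) * δ / β := by
            apply div_nonneg
            · apply mul_nonneg
              · have : (1:ℝ) ≤ (m:ℝ) := by exact_mod_cast hm1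
                linarith
              · linarith
            · linarith
          linarith
        have hr := hrec m hm1
        rw [hsplit m hm1] at hr
        have hxm := hpos m hm1
        have hxm1 := hpos (m+1) (by omega)
        -- β > t
        have hbt : t < β := by
          have h3 : t * x m ≤ ∑ i ∈ Finset.Icc 1 m, x i := hS
          nlinarith
        -- (β - t) x m ≥ 2 x (m+1)
        have h4 : 2 * x (m+1) ≤ (β - t) * x m := by nlinarith
        rw [hsplit m hm1]
        have hcast : ((m:ℝ) + 1 - 1) = (m:ℝ) := by ring
        push_cast
        rw [hcast]
        have htnext : (1 + (m:ℝ) * δ / β) = t + δ / β := by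
          rw [ht]; field_simp; ring
        rw [htnext]
        -- S m ≥ t x m ≥ 2t x(m+1)/(β-t)
        have h5 : 2 * t * x (m+1) ≤ t * ((β - t) * x m) := by nlinarith
        have h6 : t * ((β - t) * x m) = (β - t) * (t * x m) := by ring
        have h7 : (β - t) * (t * x m) ≤ (β - t) * (∑ i ∈ Finset.Icc 1 m, x i) := by
          apply mul_le_mul_of_nonneg_left hS (by linarith)
        -- need (t + δ/β) x(m+1) ≤ S m + x(m+1)
        -- suffices (t + δ/β - 1)(β - t) ≤ 2t  since (β-t) S m ≥ 2t x(m+1) ≥ (t+δ/β-1)(β-t) x(m+1)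
        have hquad : (t + δ/β - 1) * (β - t) ≤ 2 * t := by
          have hexp : δ / β * (β - t) ≤ δ := by
            rw [div_mul_eq_mul_div, div_le_iff₀ hb0]
            nlinarith
          nlinarith [sq_nonneg (t - (β-1)/2)]
        have h8 : (t + δ/β - 1) * ((β - t) * x (m+1)) ≤ 2 * t * x (m+1) := by
          calc (t + δ/β - 1) * ((β - t) * x (m+1))
              = ((t + δ/β - 1) * (β - t)) * x (m+1) := by ring
            _ ≤ (2 * t) * x (m+1) := mul_le_mul_of_nonneg_right hquad (le_of_lt hxm1)
            _ = 2 * t * x (m+1) := by ring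
        have h9 : (β - t) * ((t + δ/β) * x (m+1)) ≤ (β - t) * ((∑ i ∈ Finset.Icc 1 m, x i) + x (m+1)) := by
          have e1 : (β - t) * ((t + δ/β) * x (m+1))
              = (t + δ/β - 1) * ((β - t) * x (m+1)) + (β - t) * x (m+1) := by ring
          have e2 : (β - t) * ((∑ i ∈ Finset.Icc 1 m, x i) + x (m+1))
              = (β - t) * (∑ i ∈ Finset.Icc 1 m, x i) + (β - t) * x (m+1) := by ring
          rw [e1, e2]
          linarith [h5, h6, h7, h8]
        have hbt' : 0 < β - t := by linarith
        exact le_of_mul_le_mul_left h9 hbt'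
  -- β > t n for all n
  have hlt : ∀ n : ℕ, 1 ≤ n → 1 + ((n:ℝ) - 1) * δ / β < β := by
    intro n hn
    have hS := key n hn
    have hr := hrec n hn
    rw [hsplit n hn] at hr
    have hxn := hpos n hn
    have hxn1 := hpos (n+1) (by omega)
    nlinarith
  obtain ⟨n, hn⟩ := exists_nat_ge ((β - 1) * β / δ + 2)
  have hn1 : 1 ≤ n := by
    have : (1:ℝ) ≤ (β-1)*β/δ + 2 := by
      have : 0 ≤ (β-1)*β/δ := div_nonneg (mul_nonneg (by linarith) (by linarith)) (le_of_lt hδ)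
      linarith
    have : (1:ℝ) ≤ (n:ℝ) := by linarith
    exact_mod_cast this
  have := hlt n hn1
  have hd : (β - 1) * β / δ ≤ (n:ℝ) - 1 := by linarith
  rw [div_le_iff₀ hδ] at hd
  have hfin : β - 1 ≤ ((n:ℝ) - 1) * δ / β := by
    rw [le_div_iff₀ hb0]
    nlinarith
  linarith
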